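/- Let J, L be natural numbers, ΔU : Fin J → Fin L → ℝ, Δc : Fin J → Fin L → ℝ, and B ∈ ℝ. Define the cumulative utility U(j,l) = Σ_{l' ≤ l} ΔU(j,l') and cumulative cost c(j,l) = Σ_{l' ≤ l} Δc(j,l'). Let X be the set of x : Fin J → Fin L → ℕ with x(j,l) ∈ {0,1}, x(j,·) antitone in the layer index for each j, and Σ_{j} Σ_{l} Δc(j,l) · x(j,l) ≤ B; let Z be the set of z : Fin J → Fin L → ℕ with z(j,l) ∈ {0,1}, Σ_{l} z(j,l) ≤ 1 for every j, and Σ_{j} Σ_{l} c(j,l) · z(j,l) ≤ B. Then the maximum over x ∈ X of Σ_{j} Σ_{l} ΔU(j,l) · x(j,l) equals the maximum over z ∈ Z of Σ_{j} Σ_{l} U(j,l) · z(j,l) (both sets are nonempty and finite, since the all-zero assignment is feasible, so both maxima exist). -/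
import Mathlib

open Finset

/-- Swapping the order of summation: marginal values against cumulative
layer indicators equal cumulative values against version indicators. -/
lemma key_sum {L : ℕ} (a : Fin L → ℝ) (z : Fin L → ℕ) :
    ∑ l : Fin L, a l * ((∑ l' ∈ univ.filter (fun l' : Fin L => l ≤ l'), z l' : ℕ) : ℝ)
      = ∑ l : Fin L, (∑ l' ∈ univ.filter (fun l' : Fin L => l' ≤ l), a l') * (z l : ℝ) := by
  push_cast
  simp_rw [Finset.mul_sum, Finset.sum_mul, Finset.sum_filter]
  rw [Finset.sum_comm]

/-- From an antitone binary layer vector, produce a version indicator. -/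
lemma exists_z {L : ℕ} (x : Fin L → ℕ) (hbin : ∀ l, x l = 0 ∨ x l = 1)
    (hant : ∀ l₁ l₂ : Fin L, l₁ ≤ l₂ → x l₂ ≤ x l₁) :
    ∃ z : Fin L → ℕ, (∀ l, z l = 0 ∨ z l = 1) ∧ (∑ l : Fin L, z l ≤ 1) ∧
      ∀ l, x l = ∑ l' ∈ univ.filter (fun l' : Fin L => l ≤ l'), z l' := by
  classical
  set z : Fin L → ℕ :=
    fun l => if x l = 1 ∧ ∀ l', l < l' → x l' = 0 then 1 else 0 with hzdef
  have hP : ∀ l, x l = ∑ l' ∈ univ.filter (fun l' : Fin L => l ≤ l'), z l' := by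
    intro l
    rcases hbin l with h0 | h1
    · rw [h0]
      symm
      apply Finset.sum_eq_zero
      intro l' hl'
      simp only [mem_filter, mem_univ, true_and] at hl'
      have : x l' = 0 := Nat.le_zero.mp (h0 ▸ hant l l' hl')
      simp [hzdef, this]
    · have hne : (univ.filter (fun l' : Fin L => x l' = 1)).Nonempty :=
        ⟨l, by simp [h1]⟩
      set m := (univ.filter (fun l' : Fin L => x l' = 1)).max' hne with hm
      have hxm : x m = 1 := by
        have := Finset.max'_mem _ hne
        simpa using this
      have hlm : l ≤ m := Finset.le_max' _ l (by simp [h1])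
      have htop : ∀ l', m < l' → x l' = 0 := by
        intro l' hl'
        rcases hbin l' with h | h
        · exact h
        · exact absurd (Finset.le_max' _ l' (by simp [h])) (not_le.mpr hl')
      rw [h1]
      symm
      rw [Finset.sum_eq_single_of_mem m (by simp [hlm])]
      · simp only [hzdef]
        rw [if_pos ⟨hxm, htop⟩]
      · intro b hb hbm
        simp only [mem_filter, mem_univ, true_and] at hb
        rw [hzdef]
        dsimp only
        rw [if_neg]
        rintro ⟨hxb, hb0⟩
        have hbm' : b ≤ m := Finset.le_max' _ b (by simp [hxb])
        rcases lt_or_eq_of_le hbm' with hlt | heq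
        · exact absurd hxm (by simp [hb0 m hlt])
        · exact hbm heq
  refine ⟨z, ?_, ?_, hP⟩
  · intro l; rw [hzdef]; dsimp only; split <;> simp
  · rcases Nat.eq_zero_or_pos L with hL | hL
    · subst hL; simp
    · have h := hP ⟨0, hL⟩
      have hfil : (univ.filter (fun l' : Fin L => (⟨0, hL⟩ : Fin L) ≤ l')) = univ := by
        apply Finset.filter_true_of_mem
        intro l' _
        simp [Fin.le_def]
      rw [hfil] at h
      rw [← h]
      rcases hbin ⟨0, hL⟩ with h' | h' <;> omega

/-- Lemma 2: within a single time slot, the layered scheduling problem with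
segmented objects (precedence-feasible, i.e. antitone-in-layer, binary layer
choices under budget `B`, maximizing total marginal utility `∑ ΔU·x`) has the
same optimal value as the multiple-choice knapsack problem (at most one version
per object, version costs `c j l = ∑_{l' ≤ l} Δc j l'`, maximizing total version
utility `∑ U·z` with `U j l = ∑_{l' ≤ l} ΔU j l'`). -/
theorem stmt_7 (J L : ℕ) (ΔU Δc : Fin J → Fin L → ℝ) (B : ℝ) :
    sSup {v : ℝ | ∃ x : Fin J → Fin L → ℕ,
        ((∀ j l, x j l = 0 ∨ x j l = 1) ∧
          (∀ j : Fin J, ∀ l₁ l₂ : Fin L, l₁ ≤ l₂ → x j l₂ ≤ x j l₁) ∧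
          ∑ j : Fin J, ∑ l : Fin L, Δc j l * (x j l : ℝ) ≤ B) ∧
        v = ∑ j : Fin J, ∑ l : Fin L, ΔU j l * (x j l : ℝ)}
    = sSup {v : ℝ | ∃ z : Fin J → Fin L → ℕ,
        ((∀ j l, z j l = 0 ∨ z j l = 1) ∧
          (∀ j : Fin J, ∑ l : Fin L, z j l ≤ 1) ∧
          ∑ j : Fin J, ∑ l : Fin L,
            (∑ l' ∈ univ.filter (fun l' : Fin L => l' ≤ l), Δc j l') * (z j l : ℝ) ≤ B) ∧
        v = ∑ j : Fin J, ∑ l : Fin L,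
              (∑ l' ∈ univ.filter (fun l' : Fin L => l' ≤ l), ΔU j l') * (z j l : ℝ)} := by
  congr 1
  ext v
  simp only [Set.mem_setOf_eq]
  constructor
  · rintro ⟨x, ⟨hbin, hant, hbud⟩, hv⟩
    choose z hz1 hz2 hz3 using fun j => exists_z (x j) (hbin j) (hant j)
    have hswap : ∀ (j : Fin J) (a : Fin L → ℝ),
        ∑ l : Fin L, a l * (x j l : ℝ)
          = ∑ l : Fin L, (∑ l' ∈ univ.filter (fun l' : Fin L => l' ≤ l), a l') * (z j l : ℝ) := by
      intro j a
      simp only [hz3]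
      exact key_sum a (z j)
    refine ⟨z, ⟨hz1, hz2, ?_⟩, ?_⟩
    · refine le_trans (le_of_eq ?_) hbud
      exact Finset.sum_congr rfl fun j _ => (hswap j (Δc j)).symm
    · rw [hv]
      exact Finset.sum_congr rfl fun j _ => hswap j (ΔU j)
  · rintro ⟨z, ⟨hz1, hz2, hbud⟩, hv⟩
    refine ⟨fun j l => ∑ l' ∈ univ.filter (fun l' : Fin L => l ≤ l'), z j l', ⟨?_, ?_, ?_⟩, ?_⟩
    · intro j l
      have h1 : ∑ l' ∈ univ.filter (fun l' : Fin L => l ≤ l'), z j l' ≤ ∑ l' : Fin L, z j l' :=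
        Finset.sum_le_sum_of_subset (Finset.filter_subset _ _)
      have h2 := le_trans h1 (hz2 j)
      dsimp only
      exact Nat.le_one_iff_eq_zero_or_eq_one.mp h2
    · intro j l₁ l₂ h
      apply Finset.sum_le_sum_of_subset
      intro a ha
      simp only [mem_filter, mem_univ, true_and] at ha ⊢
      exact le_trans h ha
    · refine le_trans (le_of_eq ?_) hbud
      exact Finset.sum_congr rfl fun j _ => key_sum (Δc j) (z j)
    · rw [hv]
      exact Finset.sum_congr rfl fun j _ => (key_sum (ΔU j) (z j)).symm
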